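/- arXiv:2304.10223 — 2 statements merged into one kernel-verified Lean document; each statement's English description precedes it below -/
import Mathlib

section
/- Let D be a combinatorial arc datum with a parity function, and write Gtl = Gtl(D). Let ν : Gtl × Gtl → Gtl be a ℂ-bilinear map such that ν(1_a, x) = ν(x, 1_a) = 0 for all a ∈ 𝒜 and all x ∈ Gtl, and which satisfies the graded Hochschild 2-cocycle identity: for all paths x, y, z, (−1)^{|y|} ν(x, y)·z + (−1)^{|z|} ν(x·y, z) − (−1)^{|z|} x·ν(y, z) − (−1)^{|y|+|z|} ν(x, y·z) = 0. Then there exists a ℂ-linear map ε : Gtl → Gtl with ε(1_a) = 0 for all a ∈ 𝒜 and ε(α) = 0 for all α ∈ H, such that for all paths p, q with p·q ≠ 0 in Gtl one has ν(p, q) = (−1)^{|q|}( ε(p)·q + p·ε(q) − ε(p·q) ). -/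
open scoped Classical

/-- A combinatorial arc datum encoding an arc collection splitting a closed
oriented marked surface. -/
structure ArcDatum where
  /-- the set of arcs -/
  A : Type
  /-- the set of angle arrows -/
  H : Type
  [fintypeA : Fintype A]
  [fintypeH : Fintype H]
  [decEqA : DecidableEq A]
  [decEqH : DecidableEq H]
  /-- head of an angle arrow -/
  hd : H → A
  /-- tail of an angle arrow -/
  tl : H → A
  /-- the face permutation -/
  σF : Equiv.Perm H
  /-- the marked point permutation -/
  σM : Equiv.Perm H
  tl_σF : ∀ α, tl (σF α) = hd α
  tl_σM : ∀ α, tl (σM α) = hd α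
  σF_ne_σM : ∀ α, σF α ≠ σM α
  out_mem : ∀ α β, tl β = hd α → β = σF α ∨ β = σM α
  two_in : ∀ a, Fintype.card {e : H // hd e = a} = 2
  two_out : ∀ a, Fintype.card {e : H // tl e = a} = 2
  connected : ∀ a b : A,
    Relation.ReflTransGen (fun x y => ∃ e, (tl e = x ∧ hd e = y) ∨ (tl e = y ∧ hd e = x)) a b

attribute [instance] ArcDatum.fintypeA ArcDatum.fintypeH ArcDatum.decEqA ArcDatum.decEqH

namespace ArcDatum

/-- Generators of the path algebra: one idempotent per arc, one generator
per angle arrow. -/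
inductive Gen (D : ArcDatum) : Type
  | vertex : D.A → Gen D
  | arrow : D.H → Gen D

/-- The defining relations of the gentle algebra, presented as a quotient of the
free algebra on the vertex idempotents and the angle arrows: the standard path
algebra relations together with the gentle relations `σF α * α = 0`. -/
inductive GtlRel (D : ArcDatum) : FreeAlgebra ℂ (Gen D) → FreeAlgebra ℂ (Gen D) → Prop
  | vertex_mul (a b : D.A) :
      GtlRel D (FreeAlgebra.ι ℂ (Gen.vertex a) * FreeAlgebra.ι ℂ (Gen.vertex b))
        (if a = b then FreeAlgebra.ι ℂ (Gen.vertex a) else 0)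
  | vertex_sum :
      GtlRel D (∑ a : D.A, FreeAlgebra.ι ℂ (Gen.vertex a)) 1
  | head_mul (α : D.H) :
      GtlRel D (FreeAlgebra.ι ℂ (Gen.vertex (D.hd α)) * FreeAlgebra.ι ℂ (Gen.arrow α))
        (FreeAlgebra.ι ℂ (Gen.arrow α))
  | mul_tail (α : D.H) :
      GtlRel D (FreeAlgebra.ι ℂ (Gen.arrow α) * FreeAlgebra.ι ℂ (Gen.vertex (D.tl α)))
        (FreeAlgebra.ι ℂ (Gen.arrow α))
  | gentle (α : D.H) :
      GtlRel D (FreeAlgebra.ι ℂ (Gen.arrow (D.σF α)) * FreeAlgebra.ι ℂ (Gen.arrow α)) 0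

/-- The gentle algebra `Gtl(D)` of the arc datum `D`. -/
abbrev Gtl (D : ArcDatum) : Type := RingQuot (GtlRel D)

variable (D : ArcDatum)

/-- Image in the gentle algebra of the length zero path `1_a` at an arc `a`. -/
noncomputable def vtx (a : D.A) : D.Gtl :=
  RingQuot.mkAlgHom ℂ (GtlRel D) (FreeAlgebra.ι ℂ (Gen.vertex a))

/-- Image in the gentle algebra of an angle arrow. -/
noncomputable def arr (α : D.H) : D.Gtl :=
  RingQuot.mkAlgHom ℂ (GtlRel D) (FreeAlgebra.ι ℂ (Gen.arrow α))

/-- A list `[β_k, …, β_1]` of angle arrows is composable when it is a path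
`β_k ⋯ β_1` of the quiver, i.e. `t (β_{i+1}) = h (β_i)`. -/
def Composable (l : List D.H) : Prop := l.Chain' fun x y => D.tl x = D.hd y

/-- Image in the gentle algebra of the path `β_k ⋯ β_1` given by a composable
list `[β_k, …, β_1]`. -/
noncomputable def pathProd (l : List D.H) : D.Gtl := (l.map D.arr).prod

/-- The setoid on angle arrows whose classes are the marked points. -/
def mSetoid : Setoid D.H :=
  ⟨fun x y => D.σM.SameCycle x y,
    ⟨fun _ => Equiv.Perm.SameCycle.refl _ _, fun h => h.symm, fun h h' => h.trans h'⟩⟩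

/-- The setoid on angle arrows whose classes are the faces. -/
def fSetoid : Setoid D.H :=
  ⟨fun x y => D.σF.SameCycle x y,
    ⟨fun _ => Equiv.Perm.SameCycle.refl _ _, fun h => h.symm, fun h h' => h.trans h'⟩⟩

/-- The set of marked points: orbits of `σM`. -/
def MarkedPt : Type := Quotient D.mSetoid

/-- The set of faces: orbits of `σF`. -/
def Face : Type := Quotient D.fSetoid

noncomputable instance : Fintype D.MarkedPt :=
  @Quotient.fintype _ _ D.mSetoid (Classical.decRel _)

noncomputable instance : Fintype D.Face :=
  @Quotient.fintype _ _ D.fSetoid (Classical.decRel _)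

/-- The marked point `m(α)` around which the angle arrow `α` turns. -/
def mCls (α : D.H) : D.MarkedPt := @Quotient.mk _ D.mSetoid α

/-- The face `f(α)` in which the angle arrow `α` lies. -/
def faceCls (α : D.H) : D.Face := @Quotient.mk _ D.fSetoid α

/-- The `σM`-orbit of an angle arrow, as a finset. -/
noncomputable def mOrbitFinset (α : D.H) : Finset D.H :=
  Set.Finite.toFinset (Set.toFinite {β | D.σM.SameCycle α β})

/-- The `σF`-orbit of an angle arrow, as a finset. -/
noncomputable def fOrbitFinset (α : D.H) : Finset D.H :=
  Set.Finite.toFinset (Set.toFinite {β | D.σF.SameCycle α β})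

/-- The number of angle arrows around the marked point of `α`. -/
noncomputable def mCard (α : D.H) : ℕ := (D.mOrbitFinset α).card

/-- The list `[σM^(n-1) α, …, σM α, α]`, i.e. the path `σM^(n-1)(α) ⋯ σM(α) · α`. -/
noncomputable def turnList (α : D.H) (n : ℕ) : List D.H :=
  ((List.range n).map fun i => (D.σM ^ i) α).reverse

/-- The full turn starting at the angle arrow `α`: the image in the gentle
algebra of the path `σM^(k-1)(α) ⋯ σM(α) · α` where `k` is the size of the
`σM`-orbit of `α`. -/
noncomputable def fullTurn (α : D.H) : D.Gtl := D.pathProd (D.turnList α (D.mCard α))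

/-- The central element `ℓ_{m(α)}`: the sum of the full turns at the angle
arrows around the marked point of `α`. -/
noncomputable def ellArr (α : D.H) : D.Gtl := ∑ β ∈ D.mOrbitFinset α, D.fullTurn β

/-- The central element `ℓ_m` attached to a marked point `m`. -/
noncomputable def ell (m : D.MarkedPt) : D.Gtl := D.ellArr m.out

/-- The no monogons or digons condition: every face has at least 3 angles. -/
def NMD : Prop := ∀ α : D.H, 3 ≤ (D.fOrbitFinset α).card

/-- The set of endpoints of an arc: the marked points of the two angle arrows
with head `a`. -/
def endpoints (a : D.A) : Set D.MarkedPt := {m | ∃ α, D.hd α = a ∧ D.mCls α = m}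

/-- The no loops or two-cycles condition: every arc has two distinct endpoints
and two distinct arcs share at most one endpoint. -/
def NL2 : Prop :=
  (∀ (a : D.A) (α β : D.H), D.hd α = a → D.hd β = a → α ≠ β → D.mCls α ≠ D.mCls β) ∧
  ∀ a b : D.A, a ≠ b → (D.endpoints a ∩ D.endpoints b).Subsingleton

end ArcDatum

namespace ArcDatum

variable (D : ArcDatum)

/-- The parity of a path, given a parity function on the angle arrows. -/
def listPar (par : D.H → ZMod 2) (l : List D.H) : ZMod 2 := (l.map par).sum

/-- Index type for the paths of the quiver: either a length-zero path `1_a`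
or a composable list `[β_k, …, β_1]` of angle arrows. -/
def PathIdx (D : ArcDatum) : Type :=
  D.A ⊕ {l : List D.H // l ≠ [] ∧ D.Composable l}

/-- The image in the gentle algebra of a path. -/
noncomputable def pathElem : PathIdx D → D.Gtl
  | Sum.inl a => D.vtx a
  | Sum.inr l => D.pathProd l.1

/-- The parity of a path (length-zero paths have parity `0`). -/
def pathPar (par : D.H → ZMod 2) : PathIdx D → ZMod 2
  | Sum.inl _ => 0
  | Sum.inr l => D.listPar par l.1

end ArcDatum


/-! ### Auxiliary development for the normalization theorem -/

namespace GtlAux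

open ArcDatum

variable {D : ArcDatum}

/-! #### Sign lemmas -/

theorem sgn_mul_self (k : ZMod 2) : ((-1:ℂ))^k.val * ((-1:ℂ))^k.val = 1 := by
  rw [← mul_pow]; norm_num

theorem sgn_add (x y : ZMod 2) : ((-1:ℂ))^(x+y).val = ((-1:ℂ))^x.val * ((-1:ℂ))^y.val := by
  have h : ∀ z : ZMod 2, ((-1:ℂ))^z.val = if z = 0 then 1 else -1 := by
    intro z; rcases (by decide : ∀ z : ZMod 2, z = 0 ∨ z = 1) z with rfl | rfl
    · simp [show ZMod.val (0:ZMod 2) = 0 by decide]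
    · simp [show ZMod.val (1:ZMod 2) = 1 by decide, show (1:ZMod 2) ≠ 0 by decide]
  rw [h, h, h]
  rcases (by decide : ∀ z : ZMod 2, z = 0 ∨ z = 1) x with rfl | rfl <;>
    rcases (by decide : ∀ z : ZMod 2, z = 0 ∨ z = 1) y with rfl | rfl <;>
    simp [show (1+1:ZMod 2) = 0 by decide, show (1:ZMod 2) ≠ 0 by decide]

/-! #### Basic algebra lemmas in the gentle algebra -/

theorem vtx_mul_vtx (a b : D.A) : D.vtx a * D.vtx b = if a = b then D.vtx a else 0 := by
  have h := RingQuot.mkAlgHom_rel ℂ (GtlRel.vertex_mul (D := D) a b)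
  simpa [ArcDatum.vtx, map_mul, apply_ite (RingQuot.mkAlgHom ℂ (GtlRel D))] using h

theorem vtx_mul_arr (α : D.H) : D.vtx (D.hd α) * D.arr α = D.arr α := by
  have h := RingQuot.mkAlgHom_rel ℂ (GtlRel.head_mul (D := D) α)
  simpa [ArcDatum.vtx, ArcDatum.arr, map_mul] using h

theorem arr_mul_vtx (α : D.H) : D.arr α * D.vtx (D.tl α) = D.arr α := by
  have h := RingQuot.mkAlgHom_rel ℂ (GtlRel.mul_tail (D := D) α)
  simpa [ArcDatum.vtx, ArcDatum.arr, map_mul] using h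

theorem gentle_zero (α : D.H) : D.arr (D.σF α) * D.arr α = 0 := by
  have h := RingQuot.mkAlgHom_rel ℂ (GtlRel.gentle (D := D) α)
  simpa [ArcDatum.arr, map_mul] using h

theorem vtx_mul_arr_ne {a : D.A} {α : D.H} (h : a ≠ D.hd α) : D.vtx a * D.arr α = 0 := by
  rw [← vtx_mul_arr α, ← mul_assoc, vtx_mul_vtx, if_neg h, zero_mul]

theorem arr_mul_vtx_ne {α : D.H} {a : D.A} (h : a ≠ D.tl α) : D.arr α * D.vtx a = 0 := by
  rw [← arr_mul_vtx α, mul_assoc, vtx_mul_vtx, if_neg (fun h' => h h'.symm), mul_zero]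

theorem arr_mul_arr_ne {α β : D.H} (h : D.tl α ≠ D.hd β) : D.arr α * D.arr β = 0 := by
  rw [← arr_mul_vtx α, mul_assoc, vtx_mul_arr_ne h, mul_zero]

theorem pathProd_nil : D.pathProd [] = 1 := by simp [ArcDatum.pathProd]

theorem pathProd_cons (β : D.H) (l : List D.H) :
    D.pathProd (β :: l) = D.arr β * D.pathProd l := by
  simp [ArcDatum.pathProd]

theorem pathProd_single (β : D.H) : D.pathProd [β] = D.arr β := by
  simp [ArcDatum.pathProd]

theorem pathProd_append (l m : List D.H) :
    D.pathProd (l ++ m) = D.pathProd l * D.pathProd m := by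
  simp [ArcDatum.pathProd]

/-- The last arrow of the nonempty list `β :: l`. -/
def lastArr (β : D.H) : List D.H → D.H
  | [] => β
  | γ :: l => lastArr γ l

theorem lastArr_cons (β γ : D.H) (l : List D.H) : lastArr β (γ :: l) = lastArr γ l := rfl

theorem pathProd_mul_vtx_last (β : D.H) (l : List D.H) :
    D.pathProd (β :: l) * D.vtx (D.tl (lastArr β l)) = D.pathProd (β :: l) := by
  induction l generalizing β with
  | nil => simp [pathProd_single, lastArr, arr_mul_vtx]
  | cons γ l ih =>
    rw [pathProd_cons, lastArr_cons, mul_assoc, ih]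

theorem pathProd_mul_vtx_ne (β : D.H) (l : List D.H) {a : D.A}
    (h : a ≠ D.tl (lastArr β l)) : D.pathProd (β :: l) * D.vtx a = 0 := by
  induction l generalizing β with
  | nil => simpa [pathProd_single, lastArr] using arr_mul_vtx_ne h
  | cons γ l ih =>
    rw [pathProd_cons, mul_assoc, ih γ (by simpa [lastArr_cons] using h), mul_zero]

theorem vtx_mul_pathProd (β : D.H) (l : List D.H) :
    D.vtx (D.hd β) * D.pathProd (β :: l) = D.pathProd (β :: l) := by
  rw [pathProd_cons, ← mul_assoc, vtx_mul_arr]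

theorem vtx_mul_pathProd_ne {a : D.A} {β : D.H} (l : List D.H) (h : a ≠ D.hd β) :
    D.vtx a * D.pathProd (β :: l) = 0 := by
  rw [pathProd_cons, ← mul_assoc, vtx_mul_arr_ne h, zero_mul]

theorem arr_mul_pathProd_zero₁ {β γ : D.H} (m : List D.H) (h : D.tl β ≠ D.hd γ) :
    D.arr β * D.pathProd (γ :: m) = 0 := by
  rw [pathProd_cons, ← mul_assoc, arr_mul_arr_ne h, zero_mul]

theorem arr_mul_pathProd_zero₂ {β γ : D.H} (m : List D.H) (h : β = D.σF γ) :
    D.arr β * D.pathProd (γ :: m) = 0 := by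
  rw [pathProd_cons, ← mul_assoc, h, gentle_zero, zero_mul]

theorem listPar_append (par : D.H → ZMod 2) (l m : List D.H) :
    D.listPar par (l ++ m) = D.listPar par l + D.listPar par m := by
  simp [ArcDatum.listPar]

/-! #### A linear representation detecting paths -/

/-- Index type for the basis of the detecting module: either an arc, or a nonempty
list `β :: l` of angle arrows encoded as the pair `(β, l)`. -/
abbrev Idx (D : ArcDatum) := D.A ⊕ (D.H × List D.H)

/-- The detecting module. -/
abbrev V (D : ArcDatum) := Idx D →₀ ℂ

/-- Basis vectors of the detecting module. -/
noncomputable def bv (i : Idx D) : V D := Finsupp.single i 1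

/-- Action of the generators on basis vectors. -/
noncomputable def act : Gen D → Idx D → V D
  | Gen.vertex a, Sum.inl b => if a = b then bv (Sum.inl b) else 0
  | Gen.vertex a, Sum.inr (β, l) => if a = D.hd β then bv (Sum.inr (β, l)) else 0
  | Gen.arrow α, Sum.inl b => if D.tl α = b then bv (Sum.inr (α, ([] : List D.H))) else 0
  | Gen.arrow α, Sum.inr (β, l) =>
      if D.tl α = D.hd β ∧ α ≠ D.σF β then bv (Sum.inr (α, β :: l)) else 0

/-- Action of the generators on the detecting module. -/
noncomputable def rho (g : Gen D) : Module.End ℂ (V D) :=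
  Finsupp.linearCombination ℂ (act g)

theorem rho_bv (g : Gen D) (i : Idx D) : rho g (bv i) = act g i := by
  simp [rho, bv, Finsupp.linearCombination_single]

theorem end_ext {f g : Module.End ℂ (V D)} (h : ∀ i : Idx D, f (bv i) = g (bv i)) :
    f = g := by
  apply Finsupp.lhom_ext
  intro i c
  have hc : (Finsupp.single i c : V D) = c • bv i := by
    simp [bv, Finsupp.smul_single]
  rw [hc, map_smul, map_smul, h]

/-- The representation of the free algebra on the detecting module. -/
noncomputable def theta (D : ArcDatum) : FreeAlgebra ℂ (Gen D) →ₐ[ℂ] Module.End ℂ (V D) :=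
  FreeAlgebra.lift ℂ rho

theorem theta_rel {x y : FreeAlgebra ℂ (Gen D)} (h : GtlRel D x y) :
    theta D x = theta D y := by
  induction h with
  | vertex_mul a b =>
    rw [map_mul, apply_ite (theta D), map_zero]
    refine end_ext fun i => ?_
    by_cases hab : a = b
    · subst hab
      cases i with
      | inl c =>
        rw [Module.End.mul_apply]
        simp only [theta, FreeAlgebra.lift_ι_apply, rho_bv, act]
        split_ifs with h1 <;> simp [rho_bv, act, h1]
      | inr p =>
        obtain ⟨β, l⟩ := p
        rw [Module.End.mul_apply]
        simp only [theta, FreeAlgebra.lift_ι_apply, rho_bv, act]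
        split_ifs with h1 <;> simp [rho_bv, act, h1]
    · rw [if_neg hab, Module.End.mul_apply, LinearMap.zero_apply]
      cases i with
      | inl c =>
        simp only [theta, FreeAlgebra.lift_ι_apply, rho_bv, act]
        split_ifs with h1 <;> simp [rho_bv, act]
        intro h2; exact absurd (h2.trans h1.symm) hab
      | inr p =>
        obtain ⟨β, l⟩ := p
        simp only [theta, FreeAlgebra.lift_ι_apply, rho_bv, act]
        split_ifs with h1 <;> simp [rho_bv, act]
        intro h2; exact absurd (h2.trans h1.symm) hab
  | vertex_sum =>
    rw [map_sum, map_one]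
    refine end_ext fun i => ?_
    rw [LinearMap.sum_apply, Module.End.one_apply]
    cases i with
    | inl c =>
      simp only [theta, FreeAlgebra.lift_ι_apply, rho_bv, act]
      simp
    | inr p =>
      obtain ⟨β, l⟩ := p
      simp only [theta, FreeAlgebra.lift_ι_apply, rho_bv, act]
      simp
  | head_mul α =>
    rw [map_mul]
    refine end_ext fun i => ?_
    rw [Module.End.mul_apply]
    cases i with
    | inl c =>
      simp only [theta, FreeAlgebra.lift_ι_apply, rho_bv, act]
      split_ifs with h1 <;> simp [rho_bv, act]
    | inr p =>
      obtain ⟨β, l⟩ := p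
      simp only [theta, FreeAlgebra.lift_ι_apply, rho_bv, act]
      split_ifs with h1 <;> simp [rho_bv, act]
  | mul_tail α =>
    rw [map_mul]
    refine end_ext fun i => ?_
    rw [Module.End.mul_apply]
    cases i with
    | inl c =>
      simp only [theta, FreeAlgebra.lift_ι_apply, rho_bv, act]
      by_cases h1 : D.tl α = c
      · rw [if_pos h1, rho_bv]; simp [act]
      · rw [if_neg h1, map_zero, if_neg h1]
    | inr p =>
      obtain ⟨β, l⟩ := p
      simp only [theta, FreeAlgebra.lift_ι_apply, rho_bv, act]
      by_cases h1 : D.tl α = D.hd β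
      · rw [if_pos h1, rho_bv]; simp [act]
      · rw [if_neg h1, map_zero, if_neg (fun hc => h1 hc.1)]
  | gentle α =>
    rw [map_mul, map_zero]
    refine end_ext fun i => ?_
    rw [Module.End.mul_apply, LinearMap.zero_apply]
    cases i with
    | inl c =>
      simp only [theta, FreeAlgebra.lift_ι_apply, rho_bv, act]
      split_ifs with h1 <;> simp [rho_bv, act]
    | inr p =>
      obtain ⟨β, l⟩ := p
      simp only [theta, FreeAlgebra.lift_ι_apply, rho_bv, act]
      split_ifs with h1 <;> simp [rho_bv, act]

/-- The representation of the gentle algebra on the detecting module. -/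
noncomputable def thetaBar (D : ArcDatum) : D.Gtl →ₐ[ℂ] Module.End ℂ (V D) :=
  RingQuot.liftAlgHom ℂ ⟨theta D, fun _ _ h => theta_rel h⟩

theorem thetaBar_vtx (a : D.A) : thetaBar D (D.vtx a) = rho (Gen.vertex a) := by
  rw [ArcDatum.vtx, thetaBar, RingQuot.liftAlgHom_mkAlgHom_apply]
  simp [theta, FreeAlgebra.lift_ι_apply]

theorem thetaBar_arr (α : D.H) : thetaBar D (D.arr α) = rho (Gen.arrow α) := by
  rw [ArcDatum.arr, thetaBar, RingQuot.liftAlgHom_mkAlgHom_apply]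
  simp [theta, FreeAlgebra.lift_ι_apply]

/-- The base vector from which paths are read off. -/
noncomputable def uVec (D : ArcDatum) : V D := ∑ a : D.A, bv (Sum.inl a)

/-- The linear map reading off the path decomposition of an element. -/
noncomputable def psi (D : ArcDatum) : D.Gtl →ₗ[ℂ] V D where
  toFun x := thetaBar D x (uVec D)
  map_add' x y := by simp [map_add]
  map_smul' c x := by simp [map_smul]

theorem psi_apply (x : D.Gtl) : psi D x = thetaBar D x (uVec D) := rfl

theorem psi_mul (x y : D.Gtl) : psi D (x * y) = thetaBar D x (psi D y) := by
  simp [psi_apply, map_mul, Module.End.mul_apply]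

theorem psi_vtx (a : D.A) : psi D (D.vtx a) = bv (Sum.inl a) := by
  rw [psi_apply, thetaBar_vtx, uVec, map_sum]
  simp only [rho_bv, act]
  simp

theorem thetaBar_pathProd_inl (β : D.H) (l : List D.H) (hcomp : D.Composable (β :: l))
    (hne : D.pathProd (β :: l) ≠ 0) :
    thetaBar D (D.pathProd (β :: l)) (bv (Sum.inl (D.tl (lastArr β l)))) =
      bv (Sum.inr (β, l)) := by
  induction l generalizing β with
  | nil =>
    rw [pathProd_single, thetaBar_arr, rho_bv]
    simp [act, lastArr]
  | cons γ l ih =>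
    have h1 : D.tl β = D.hd γ := (List.isChain_cons_cons.mp hcomp).1
    have hc' : D.Composable (γ :: l) := (List.isChain_cons_cons.mp hcomp).2
    have h2 : β ≠ D.σF γ := by
      intro h; exact hne (by rw [pathProd_cons, arr_mul_pathProd_zero₂ l h])
    have hne' : D.pathProd (γ :: l) ≠ 0 := by
      intro h; exact hne (by rw [pathProd_cons, h, mul_zero])
    rw [pathProd_cons, map_mul, Module.End.mul_apply, lastArr_cons, ih γ hc' hne',
      thetaBar_arr, rho_bv]
    simp [act, h1, h2]

theorem psi_pathProd (β : D.H) (l : List D.H) (hcomp : D.Composable (β :: l))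
    (hne : D.pathProd (β :: l) ≠ 0) :
    psi D (D.pathProd (β :: l)) = bv (Sum.inr (β, l)) := by
  conv_lhs => rw [← pathProd_mul_vtx_last β l]
  rw [psi_mul, psi_vtx]
  exact thetaBar_pathProd_inl β l hcomp hne

theorem thetaBar_pathProd_inr (β : D.H) (l : List D.H) (γ : D.H) (m : List D.H)
    (hcomp : D.Composable (β :: l))
    (hne : D.pathProd (β :: l) * D.pathProd (γ :: m) ≠ 0) :
    thetaBar D (D.pathProd (β :: l)) (bv (Sum.inr (γ, m))) =
      bv (Sum.inr (β, l ++ γ :: m)) := by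
  induction l generalizing β with
  | nil =>
    have hj : D.tl β = D.hd γ := by
      by_contra h
      exact hne (by rw [pathProd_single, arr_mul_pathProd_zero₁ m h])
    have hg : β ≠ D.σF γ := by
      intro h
      exact hne (by rw [pathProd_single, arr_mul_pathProd_zero₂ m h])
    rw [pathProd_single, thetaBar_arr, rho_bv]
    simp [act, hj, hg]
  | cons δ l ih =>
    have h1 : D.tl β = D.hd δ := (List.isChain_cons_cons.mp hcomp).1
    have hc' : D.Composable (δ :: l) := (List.isChain_cons_cons.mp hcomp).2
    have h2 : β ≠ D.σF δ := by
      intro h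
      exact hne (by rw [pathProd_cons, arr_mul_pathProd_zero₂ l h, zero_mul])
    have hne' : D.pathProd (δ :: l) * D.pathProd (γ :: m) ≠ 0 := by
      intro h
      exact hne (by rw [pathProd_cons, mul_assoc, h, mul_zero])
    rw [pathProd_cons, map_mul, Module.End.mul_apply, ih δ hc' hne', thetaBar_arr, rho_bv]
    simp [act, h1, h2]

/-! #### The normalizing linear map -/

variable (par : D.H → ZMod 2) (ν : D.Gtl →ₗ[ℂ] D.Gtl →ₗ[ℂ] D.Gtl)

/-- The value of the normalizing map on the path given by a list of arrows. -/
noncomputable def eps0 : List D.H → D.Gtl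
  | [] => 0
  | [_] => 0
  | β :: γ :: m =>
      D.arr β * eps0 (γ :: m)
        - ((-1:ℂ)) ^ (D.listPar par (γ :: m)).val • ν (D.arr β) (D.pathProd (γ :: m))

theorem eps0_single (β : D.H) : eps0 par ν [β] = 0 := rfl

theorem eps0_cons (β γ : D.H) (m : List D.H) :
    eps0 par ν (β :: γ :: m) =
      D.arr β * eps0 par ν (γ :: m)
        - ((-1:ℂ)) ^ (D.listPar par (γ :: m)).val • ν (D.arr β) (D.pathProd (γ :: m)) := rfl

/-- Values of the normalizing map on the detecting basis. -/
noncomputable def Efun : Idx D → D.Gtl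
  | Sum.inl _ => 0
  | Sum.inr (β, l) => eps0 par ν (β :: l)

/-- The normalizing linear map. -/
noncomputable def epsMap : D.Gtl →ₗ[ℂ] D.Gtl :=
  (Finsupp.linearCombination ℂ (Efun par ν)).comp (psi D)

theorem epsMap_apply (x : D.Gtl) :
    epsMap par ν x = Finsupp.linearCombination ℂ (Efun par ν) (psi D x) := rfl

theorem epsMap_vtx (a : D.A) : epsMap par ν (D.vtx a) = 0 := by
  rw [epsMap_apply, psi_vtx]
  simp [bv, Finsupp.linearCombination_single, Efun]

theorem epsMap_pathProd (β : D.H) (l : List D.H) (hcomp : D.Composable (β :: l))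
    (hne : D.pathProd (β :: l) ≠ 0) :
    epsMap par ν (D.pathProd (β :: l)) = eps0 par ν (β :: l) := by
  rw [epsMap_apply, psi_pathProd β l hcomp hne]
  simp [bv, Finsupp.linearCombination_single, Efun]

theorem epsMap_arr (α : D.H) : epsMap par ν (D.arr α) = 0 := by
  by_cases h : D.arr α = 0
  · rw [h, map_zero]
  · rw [← pathProd_single (D := D) α,
      epsMap_pathProd par ν α [] (List.isChain_singleton α) (by rwa [pathProd_single]),
      eps0_single]

theorem epsMap_mul_pathProd (β : D.H) (l : List D.H) (γ : D.H) (m : List D.H)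
    (hcomp : D.Composable (β :: l)) (hcomp' : D.Composable (γ :: m))
    (hne : D.pathProd (β :: l) * D.pathProd (γ :: m) ≠ 0) :
    epsMap par ν (D.pathProd (β :: l) * D.pathProd (γ :: m)) =
      eps0 par ν (β :: (l ++ γ :: m)) := by
  have hq : D.pathProd (γ :: m) ≠ 0 := fun h => hne (by rw [h, mul_zero])
  rw [epsMap_apply, psi_mul, psi_pathProd γ m hcomp' hq,
    thetaBar_pathProd_inr β l γ m hcomp hne]
  simp [bv, Finsupp.linearCombination_single, Efun]

/-! #### Consequences of the cocycle identity -/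

/-- The graded Hochschild 2-cocycle identity on paths. -/
def IsCocycle : Prop :=
  ∀ x y z : PathIdx D,
    ((-1 : ℂ)) ^ (D.pathPar par y).val • (ν (D.pathElem x) (D.pathElem y) * D.pathElem z)
    + ((-1 : ℂ)) ^ (D.pathPar par z).val • ν (D.pathElem x * D.pathElem y) (D.pathElem z)
    - ((-1 : ℂ)) ^ (D.pathPar par z).val • (D.pathElem x * ν (D.pathElem y) (D.pathElem z))
    - ((-1 : ℂ)) ^ (D.pathPar par y + D.pathPar par z).val •
        ν (D.pathElem x) (D.pathElem y * D.pathElem z) = 0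

theorem nu_left (hleft : ∀ (a : D.A) (x : D.Gtl), ν (D.vtx a) x = 0)
    (hcoc : IsCocycle par ν) (β γ : D.H) (m : List D.H) (hc : D.Composable (γ :: m)) :
    D.vtx (D.hd β) * ν (D.arr β) (D.pathProd (γ :: m)) =
      ν (D.arr β) (D.pathProd (γ :: m)) := by
  have h := hcoc (Sum.inl (D.hd β)) (Sum.inr ⟨[β], by simp, List.isChain_singleton β⟩)
    (Sum.inr ⟨γ :: m, by simp, hc⟩)
  simp only [ArcDatum.pathElem, pathProd_single] at h
  rw [hleft, hleft, vtx_mul_arr] at h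
  simp only [zero_mul, smul_zero, zero_add, sub_zero] at h
  have hs : ((-1:ℂ)) ^ (D.pathPar par (Sum.inr ⟨γ :: m, by simp, hc⟩ : PathIdx D)).val ≠ 0 :=
    pow_ne_zero _ (by norm_num)
  have h2 := sub_eq_zero.mp h
  exact (smul_right_injective D.Gtl hs h2).symm

theorem nu_right (hright : ∀ (a : D.A) (x : D.Gtl), ν x (D.vtx a) = 0)
    (hcoc : IsCocycle par ν) (β γ : D.H) (m : List D.H) (hc : D.Composable (γ :: m)) :
    ν (D.arr β) (D.pathProd (γ :: m)) * D.vtx (D.tl (lastArr γ m)) =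
      ν (D.arr β) (D.pathProd (γ :: m)) := by
  have h := hcoc (Sum.inr ⟨[β], by simp, List.isChain_singleton β⟩)
    (Sum.inr ⟨γ :: m, by simp, hc⟩) (Sum.inl (D.tl (lastArr γ m)))
  simp only [ArcDatum.pathElem, ArcDatum.pathPar, pathProd_single, add_zero] at h
  rw [hright, hright, pathProd_mul_vtx_last] at h
  simp only [mul_zero, smul_zero, add_zero, sub_zero] at h
  have hs : ((-1:ℂ)) ^ (D.listPar par (γ :: m)).val ≠ 0 := pow_ne_zero _ (by norm_num)
  exact smul_right_injective D.Gtl hs (sub_eq_zero.mp h)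

theorem eps0_left_absorb (hleft : ∀ (a : D.A) (x : D.Gtl), ν (D.vtx a) x = 0)
    (hcoc : IsCocycle par ν) (β : D.H) (l : List D.H) (hc : D.Composable (β :: l)) :
    D.vtx (D.hd β) * eps0 par ν (β :: l) = eps0 par ν (β :: l) := by
  cases l with
  | nil => rw [eps0_single, mul_zero]
  | cons γ m =>
    rw [eps0_cons, mul_sub, ← mul_assoc, vtx_mul_arr, mul_smul_comm,
      nu_left par ν hleft hcoc β γ m (List.isChain_cons_cons.mp hc).2]

theorem eps0_right_absorb (hright : ∀ (a : D.A) (x : D.Gtl), ν x (D.vtx a) = 0)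
    (hcoc : IsCocycle par ν) :
    ∀ (l : List D.H) (β : D.H), D.Composable (β :: l) →
      eps0 par ν (β :: l) * D.vtx (D.tl (lastArr β l)) = eps0 par ν (β :: l) := by
  intro l
  induction l with
  | nil => intro β _; rw [eps0_single, zero_mul]
  | cons γ m ih =>
    intro β hc
    rw [eps0_cons, lastArr_cons, sub_mul, mul_assoc, ih γ (List.isChain_cons_cons.mp hc).2,
      smul_mul_assoc, nu_right par ν hright hcoc β γ m (List.isChain_cons_cons.mp hc).2]

theorem cocycle_lists (hcoc : IsCocycle par ν) (β : D.H) {l1 l2 : List D.H}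
    (h1 : D.Composable l1) (h2 : D.Composable l2) (hn1 : l1 ≠ []) (hn2 : l2 ≠ []) :
    ((-1:ℂ)) ^ (D.listPar par l1).val • (ν (D.arr β) (D.pathProd l1) * D.pathProd l2)
    + ((-1:ℂ)) ^ (D.listPar par l2).val • ν (D.arr β * D.pathProd l1) (D.pathProd l2)
    - ((-1:ℂ)) ^ (D.listPar par l2).val • (D.arr β * ν (D.pathProd l1) (D.pathProd l2))
    - (((-1:ℂ)) ^ (D.listPar par l1).val * ((-1:ℂ)) ^ (D.listPar par l2).val) •
        ν (D.arr β) (D.pathProd l1 * D.pathProd l2) = 0 := by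
  have h := hcoc (Sum.inr ⟨[β], by simp, List.isChain_singleton β⟩)
    (Sum.inr ⟨l1, hn1, h1⟩) (Sum.inr ⟨l2, hn2, h2⟩)
  simp only [ArcDatum.pathElem, ArcDatum.pathPar, pathProd_single, sgn_add] at h
  exact h

theorem main_lemma (hcoc : IsCocycle par ν) :
    ∀ (l : List D.H) (β : D.H), D.Composable (β :: l) →
      ∀ (γ : D.H) (m : List D.H), D.Composable (γ :: m) →
      D.pathProd (β :: l) * D.pathProd (γ :: m) ≠ 0 →
      ν (D.pathProd (β :: l)) (D.pathProd (γ :: m)) =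
        ((-1:ℂ)) ^ (D.listPar par (γ :: m)).val •
          (eps0 par ν (β :: l) * D.pathProd (γ :: m)
            + D.pathProd (β :: l) * eps0 par ν (γ :: m)
            - eps0 par ν (β :: (l ++ γ :: m))) := by
  intro l
  induction l with
  | nil =>
    intro β _ γ m _ _
    simp only [List.nil_append, pathProd_single, eps0_single, eps0_cons, zero_mul, zero_add]
    rw [sub_sub_cancel, smul_smul, sgn_mul_self, one_smul]
  | cons δ t ih =>
    intro β hp γ m hq hne
    have hβδ : D.tl β = D.hd δ := (List.isChain_cons_cons.mp hp).1
    have hpy : D.Composable (δ :: t) := (List.isChain_cons_cons.mp hp).2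
    have hyz : D.pathProd (δ :: t) * D.pathProd (γ :: m) ≠ 0 := by
      intro h0; exact hne (by rw [pathProd_cons, mul_assoc, h0, mul_zero])
    have IH := ih δ hpy γ m hq hyz
    have h := cocycle_lists par ν hcoc β hpy hq (by simp) (by simp)
    have e1 : ((-1:ℂ)) ^ (D.listPar par (δ :: t)).val • ν (D.arr β) (D.pathProd (δ :: t))
        = D.arr β * eps0 par ν (δ :: t) - eps0 par ν (β :: δ :: t) := by
      rw [eps0_cons, sub_sub_cancel]
    have e3 : (((-1:ℂ)) ^ (D.listPar par (δ :: t)).val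
            * ((-1:ℂ)) ^ (D.listPar par (γ :: m)).val)
          • ν (D.arr β) (D.pathProd (δ :: t) * D.pathProd (γ :: m))
        = D.arr β * eps0 par ν (δ :: (t ++ γ :: m))
            - eps0 par ν (β :: δ :: (t ++ γ :: m)) := by
      rw [eps0_cons, sub_sub_cancel, ← pathProd_append, ← sgn_add, ← listPar_append]
      simp [List.cons_append]
    rw [← smul_mul_assoc, e1, IH, e3, mul_smul_comm, smul_smul, sgn_mul_self, one_smul] at h
    simp only [pathProd_cons β (δ :: t), List.cons_append]
    have hs2 : ((-1:ℂ)) ^ (D.listPar par (γ :: m)).val ≠ 0 := pow_ne_zero _ (by norm_num)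
    refine smul_right_injective D.Gtl hs2 ?_
    beta_reduce
    rw [smul_smul, sgn_mul_self, one_smul]
    simp only [mul_add, mul_sub, add_mul, sub_mul, mul_assoc] at h ⊢
    rw [← sub_eq_zero, ← h]
    abel

end GtlAux

open ArcDatum in
/-- Every normalized graded Hochschild 2-cocycle `ν` of the gentle algebra is,
on pairs of paths with nonvanishing product, the coboundary of a `ℂ`-linear
map `ε` vanishing on the vertex idempotents and on the angle arrows. -/
theorem hochschild_two_cocycle_normalization (D : ArcDatum) (par : D.H → ZMod 2)
    (ν : D.Gtl →ₗ[ℂ] D.Gtl →ₗ[ℂ] D.Gtl)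
    (hleft : ∀ (a : D.A) (x : D.Gtl), ν (D.vtx a) x = 0)
    (hright : ∀ (a : D.A) (x : D.Gtl), ν x (D.vtx a) = 0)
    (hcocycle : ∀ x y z : ArcDatum.PathIdx D,
      ((-1 : ℂ)) ^ (D.pathPar par y).val • (ν (D.pathElem x) (D.pathElem y) * D.pathElem z)
      + ((-1 : ℂ)) ^ (D.pathPar par z).val • ν (D.pathElem x * D.pathElem y) (D.pathElem z)
      - ((-1 : ℂ)) ^ (D.pathPar par z).val • (D.pathElem x * ν (D.pathElem y) (D.pathElem z))
      - ((-1 : ℂ)) ^ (D.pathPar par y + D.pathPar par z).val •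
          ν (D.pathElem x) (D.pathElem y * D.pathElem z) = 0) :
    ∃ ε : D.Gtl →ₗ[ℂ] D.Gtl,
      (∀ a : D.A, ε (D.vtx a) = 0) ∧
      (∀ α : D.H, ε (D.arr α) = 0) ∧
      ∀ p q : ArcDatum.PathIdx D, D.pathElem p * D.pathElem q ≠ 0 →
        ν (D.pathElem p) (D.pathElem q) =
          ((-1 : ℂ)) ^ (D.pathPar par q).val •
            (ε (D.pathElem p) * D.pathElem q + D.pathElem p * ε (D.pathElem q)
              - ε (D.pathElem p * D.pathElem q)) := by
    classical
  have hcoc' : GtlAux.IsCocycle par ν := hcocycle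
  refine ⟨GtlAux.epsMap par ν, fun a => GtlAux.epsMap_vtx par ν a,
    fun α => GtlAux.epsMap_arr par ν α, ?_⟩
  intro p q hne
  obtain (a | ⟨l, hl0, hlc⟩) := p
  · obtain (b | ⟨l', hl0', hlc'⟩) := q
    · -- two length-zero paths
      simp only [ArcDatum.pathElem, ArcDatum.pathPar] at hne ⊢
      rw [GtlAux.vtx_mul_vtx] at hne ⊢
      by_cases hab : a = b
      · subst hab
        rw [if_pos rfl] at hne ⊢
        rw [hleft, GtlAux.epsMap_vtx]
        simp
      · rw [if_neg hab] at hne; exact absurd rfl hne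
    · -- length-zero path times a positive path
      cases l' with
      | nil => exact absurd rfl hl0'
      | cons γ m =>
        simp only [ArcDatum.pathElem, ArcDatum.pathPar] at hne ⊢
        have ha : a = D.hd γ := by
          by_contra hc
          exact hne (GtlAux.vtx_mul_pathProd_ne m hc)
        subst ha
        have hpne : D.pathProd (γ :: m) ≠ 0 := by
          intro h0; exact hne (by rw [h0, mul_zero])
        rw [hleft, GtlAux.vtx_mul_pathProd, GtlAux.epsMap_vtx,
          GtlAux.epsMap_pathProd par ν γ m hlc' hpne,
          GtlAux.eps0_left_absorb par ν hleft hcoc' γ m hlc']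
        simp
  · obtain (b | ⟨l', hl0', hlc'⟩) := q
    · -- positive path times a length-zero path
      cases l with
      | nil => exact absurd rfl hl0
      | cons β m =>
        simp only [ArcDatum.pathElem, ArcDatum.pathPar] at hne ⊢
        have hpne : D.pathProd (β :: m) ≠ 0 := by
          intro h0; exact hne (by rw [h0, zero_mul])
        have hb : b = D.tl (GtlAux.lastArr β m) := by
          by_contra hc
          exact hne (GtlAux.pathProd_mul_vtx_ne β m hc)
        subst hb
        rw [hright, GtlAux.pathProd_mul_vtx_last, GtlAux.epsMap_vtx,
          GtlAux.epsMap_pathProd par ν β m hlc hpne,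
          GtlAux.eps0_right_absorb par ν hright hcoc' m β hlc]
        simp
    · -- two positive paths
      cases l with
      | nil => exact absurd rfl hl0
      | cons β t =>
        cases l' with
        | nil => exact absurd rfl hl0'
        | cons γ m =>
          simp only [ArcDatum.pathElem, ArcDatum.pathPar] at hne ⊢
          have hpne : D.pathProd (β :: t) ≠ 0 := by
            intro h0; exact hne (by rw [h0, zero_mul])
          have hqne : D.pathProd (γ :: m) ≠ 0 := by
            intro h0; exact hne (by rw [h0, mul_zero])
          rw [GtlAux.epsMap_pathProd par ν β t hlc hpne,
            GtlAux.epsMap_pathProd par ν γ m hlc' hqne,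
            GtlAux.epsMap_mul_pathProd par ν β t γ m hlc hlc' hne]
          exact GtlAux.main_lemma par ν hcoc' t β hlc γ m hlc' hne
end

section
/- Let D be a combinatorial arc datum satisfying [NMD]. For an arc a ∈ 𝒜 and an angle arrow α with h(α) = a, set ν_{a,α} := e_α − e_{σ_F(α)} ∈ ℂ^H (where e_β denotes the indicator function of β). Then: (i) ν_{a,α} ∈ S; (ii) for the two angle arrows α, α′ with head a, one has ν_{a,α} + ν_{a,α′} ∈ B; (iii) if 𝒯 ⊆ 𝒜 is the edge set of a spanning tree of the face graph Γ of D and for each a ∈ 𝒜∖𝒯 an angle arrow α_a with h(α_a) = a is chosen, then the classes ν_{a,α_a} + B, a ∈ 𝒜∖𝒯, form a ℂ-basis of the quotient space S/B. -/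
open scoped Classical

namespace ArcDatum

variable (D : ArcDatum)

/-- The subspace `S = {λ ∈ ℂ^H : Σ_{α ∈ f} λ_α = 0 for every face f}`. -/
noncomputable def Ssub : Submodule ℂ (D.H → ℂ) where
  carrier := {v | ∀ f : D.Face, ∑ α ∈ D.fOrbitFinset f.out, v α = 0}
  add_mem' := by
    intro a b ha hb f
    simp only [Pi.add_apply, Finset.sum_add_distrib, ha f, hb f, add_zero]
  zero_mem' := by intro f; simp
  smul_mem' := by
    intro c v hv f
    simp only [Pi.smul_apply, smul_eq_mul, ← Finset.mul_sum, hv f, mul_zero]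

/-- The subspace `B = {λ ∈ ℂ^H : λ_α = e_{h(α)} − e_{t(α)} for some e ∈ ℂ^𝒜}`. -/
noncomputable def Bsub : Submodule ℂ (D.H → ℂ) where
  carrier := {v | ∃ e : D.A → ℂ, ∀ α : D.H, v α = e (D.hd α) - e (D.tl α)}
  add_mem' := by
    rintro a b ⟨e, he⟩ ⟨e', he'⟩
    exact ⟨e + e', fun α => by simp [he α, he' α]; ring⟩
  zero_mem' := ⟨0, fun α => by simp⟩
  smul_mem' := by
    rintro c v ⟨e, he⟩
    exact ⟨c • e, fun α => by simp [he α]; ring⟩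

/-- The arc class `ν_{a,α} = e_α − e_{σF α}` attached to an angle arrow `α`
(with head the arc `a`). -/
noncomputable def nuArc (α : D.H) : D.H → ℂ :=
  fun β => (if β = α then 1 else 0) - (if β = D.σF α then 1 else 0)

/-- `𝒯 ⊆ 𝒜` is the edge set of a spanning tree of the face graph: the faces
are connected by edges of `𝒯` (the edge of an arc `a` joins the faces of the
two angle arrows with head `a`), and `#𝒯 = #F − 1`. -/
def IsSpanningTree (𝒯 : Finset D.A) : Prop :=
  (∀ f g : D.Face, Relation.ReflTransGen
    (fun f g => ∃ a ∈ 𝒯, ∃ α β : D.H,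
      D.hd α = a ∧ D.hd β = a ∧ D.faceCls α = f ∧ D.faceCls β = g) f g) ∧
  (𝒯.card : ℤ) = (Nat.card D.Face : ℤ) - 1

end ArcDatum

namespace ArcDatum

variable (D : ArcDatum)

/-- indicator function of an angle arrow -/
noncomputable def ind (x : D.H) : D.H → ℂ := fun β => if β = x then 1 else 0

lemma mem_fOrbit {α β : D.H} : β ∈ D.fOrbitFinset α ↔ D.σF.SameCycle α β := by
  simp [fOrbitFinset]

lemma mem_Ssub {v : D.H → ℂ} :
    v ∈ D.Ssub ↔ ∀ f : D.Face, ∑ α ∈ D.fOrbitFinset f.out, v α = 0 := Iff.rfl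

lemma mem_Bsub {v : D.H → ℂ} :
    v ∈ D.Bsub ↔ ∃ e : D.A → ℂ, ∀ α : D.H, v α = e (D.hd α) - e (D.tl α) := Iff.rfl

lemma sum_orbit_comp (ρ : D.H) (g : D.H → ℂ) :
    ∑ β ∈ D.fOrbitFinset ρ, g (D.σF β) = ∑ β ∈ D.fOrbitFinset ρ, g β := by
  apply Finset.sum_equiv D.σF
  · intro β
    simp only [mem_fOrbit, Equiv.Perm.sameCycle_apply_right]
  · intro β _; rfl

lemma nuArc_mem_Ssub (α : D.H) : D.nuArc α ∈ D.Ssub := by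
  intro g
  have h1 : ∑ β ∈ D.fOrbitFinset g.out, (if β = α then (1:ℂ) else 0)
      = if α ∈ D.fOrbitFinset g.out then (1:ℂ) else 0 := by
    rw [Finset.sum_ite_eq']
  have h2 : ∑ β ∈ D.fOrbitFinset g.out, (if β = D.σF α then (1:ℂ) else 0)
      = if D.σF α ∈ D.fOrbitFinset g.out then (1:ℂ) else 0 := by
    rw [Finset.sum_ite_eq']
  have h3 : (D.σF α ∈ D.fOrbitFinset g.out) ↔ (α ∈ D.fOrbitFinset g.out) := by
    simp [mem_fOrbit, Equiv.Perm.sameCycle_apply_right]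
  simp only [nuArc, Finset.sum_sub_distrib, h1, h2, h3, sub_self]

lemma faceCls_eq_of_sameCycle {α β : D.H} (h : D.σF.SameCycle α β) :
    D.faceCls α = D.faceCls β := Quotient.sound h

lemma sum_nuArc_orbit (α : D.H) : ∑ β ∈ D.fOrbitFinset α, D.nuArc β = 0 := by
  funext γ
  rw [Finset.sum_apply]
  have h2 : ∑ β ∈ D.fOrbitFinset α, (if γ = D.σF β then (1:ℂ) else 0)
      = ∑ β ∈ D.fOrbitFinset α, (if γ = β then (1:ℂ) else 0) :=
    D.sum_orbit_comp α (fun β => if γ = β then (1:ℂ) else 0)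
  simp only [nuArc, Finset.sum_sub_distrib, h2, sub_self, Pi.zero_apply]

lemma head_fiber_eq {a : D.A} {α α' : D.H} (hα : D.hd α = a) (hα' : D.hd α' = a)
    (hne : α ≠ α') : Finset.univ.filter (fun e => D.hd e = a) = {α, α'} := by
  symm
  apply Finset.eq_of_subset_of_card_le
  · intro x hx
    rcases Finset.mem_insert.mp hx with h | h
    · subst h; simp [hα]
    · rw [Finset.mem_singleton] at h; subst h; simp [hα']
  · rw [Finset.card_pair hne, ← Fintype.card_subtype, D.two_in]

lemma tail_fiber_eq {a : D.A} {α α' : D.H} (hα : D.hd α = a) (hα' : D.hd α' = a)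
    (hne : α ≠ α') :
    Finset.univ.filter (fun e => D.tl e = a) = {D.σF α, D.σF α'} := by
  symm
  apply Finset.eq_of_subset_of_card_le
  · intro x hx
    rcases Finset.mem_insert.mp hx with h | h
    · subst h; simp [D.tl_σF, hα]
    · rw [Finset.mem_singleton] at h; subst h; simp [D.tl_σF, hα']
  · rw [Finset.card_pair (fun h => hne (D.σF.injective h)),
      ← Fintype.card_subtype, D.two_out]

lemma nuArc_add_mem_Bsub {a : D.A} {α α' : D.H} (hα : D.hd α = a) (hα' : D.hd α' = a)
    (hne : α ≠ α') : D.nuArc α + D.nuArc α' ∈ D.Bsub := by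
  refine ⟨fun b => if b = a then 1 else 0, fun β => ?_⟩
  have hhd : (if D.hd β = a then (1:ℂ) else 0)
      = (if β = α then 1 else 0) + (if β = α' then 1 else 0) := by
    by_cases h : β = α
    · subst h; simp [hα, fun h => hne h]
    · by_cases h' : β = α'
      · subst h'; simp [hα', h]
      · have hβ : β ∉ ({α, α'} : Finset D.H) := by simp [h, h']
        rw [← D.head_fiber_eq hα hα' hne] at hβ
        simp only [Finset.mem_filter, Finset.mem_univ, true_and] at hβ
        simp [h, h', hβ]
  have htl : (if D.tl β = a then (1:ℂ) else 0)
      = (if β = D.σF α then 1 else 0) + (if β = D.σF α' then 1 else 0) := by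
    have hFne : D.σF α ≠ D.σF α' := fun h => hne (D.σF.injective h)
    by_cases h : β = D.σF α
    · subst h; simp [D.tl_σF, hα, fun h => hFne h]
    · by_cases h' : β = D.σF α'
      · subst h'; simp [D.tl_σF, hα', h]
      · have hβ : β ∉ ({D.σF α, D.σF α'} : Finset D.H) := by simp [h, h']
        rw [← D.tail_fiber_eq hα hα' hne] at hβ
        simp only [Finset.mem_filter, Finset.mem_univ, true_and] at hβ
        simp [h, h', hβ]
  simp only [Pi.add_apply, nuArc, hhd, htl]
  ring

/-- the face-sum linear map, whose kernel is `S` -/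
noncomputable def faceSumMap : (D.H → ℂ) →ₗ[ℂ] (D.Face → ℂ) where
  toFun v := fun f => ∑ β ∈ D.fOrbitFinset f.out, v β
  map_add' u v := by funext f; simp [Finset.sum_add_distrib]
  map_smul' c v := by funext f; simp [Finset.mul_sum]

lemma ker_faceSumMap : LinearMap.ker D.faceSumMap = D.Ssub := by
  ext v
  simp [LinearMap.mem_ker, faceSumMap, funext_iff, mem_Ssub, LinearMap.coe_mk,
    AddHom.coe_mk]

lemma out_mem_orbit_iff (f g : D.Face) :
    f.out ∈ D.fOrbitFinset g.out ↔ f = g := by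
  rw [mem_fOrbit]
  constructor
  · intro h
    have h2 : (@Quotient.mk _ D.fSetoid g.out) = (@Quotient.mk _ D.fSetoid f.out) :=
      Quotient.sound h
    exact (Quotient.out_eq (s := D.fSetoid) f).symm.trans (h2.symm.trans (Quotient.out_eq (s := D.fSetoid) g))
  · rintro rfl
    exact Equiv.Perm.SameCycle.refl _ _

lemma sum_ind_out (c : D.Face → ℂ) (g : D.Face) :
    ∑ β ∈ D.fOrbitFinset g.out, (∑ f : D.Face, c f * D.ind f.out β) = c g := by
  rw [Finset.sum_comm]
  have h1 : ∀ f : D.Face, ∑ β ∈ D.fOrbitFinset g.out, c f * D.ind f.out β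
      = if f = g then c f else 0 := by
    intro f
    have : ∀ β, c f * D.ind f.out β = if β = f.out then c f else 0 := by
      intro β; simp [ind, mul_ite]
    simp only [this, Finset.sum_ite_eq', D.out_mem_orbit_iff f g]
  simp only [h1, Finset.sum_ite_eq', Finset.mem_univ, if_true]

lemma faceSumMap_surj : Function.Surjective D.faceSumMap := by
  intro u
  refine ⟨fun β => ∑ f : D.Face, u f * D.ind f.out β, ?_⟩
  funext g
  exact D.sum_ind_out u g

/-- the coboundary linear map, whose range is `B` -/
noncomputable def dMap : (D.A → ℂ) →ₗ[ℂ] (D.H → ℂ) where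
  toFun e := fun α => e (D.hd α) - e (D.tl α)
  map_add' u v := by funext α; simp; ring
  map_smul' c v := by funext α; simp; ring

lemma range_dMap : LinearMap.range D.dMap = D.Bsub := by
  ext v
  simp [LinearMap.mem_range, dMap, mem_Bsub, funext_iff, eq_comm]

lemma Bsub_le_Ssub : D.Bsub ≤ D.Ssub := by
  rintro v ⟨e, he⟩ g
  have h1 : ∑ β ∈ D.fOrbitFinset g.out, v β
      = ∑ β ∈ D.fOrbitFinset g.out, (e (D.hd β) - e (D.tl β)) :=
    Finset.sum_congr rfl fun β _ => he β
  have h2 : ∑ β ∈ D.fOrbitFinset g.out, e (D.hd β)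
      = ∑ β ∈ D.fOrbitFinset g.out, e (D.tl β) := by
    have h3 : ∀ β, e (D.hd β) = e (D.tl (D.σF β)) := fun β => by rw [D.tl_σF]
    simp only [h3]
    exact D.sum_orbit_comp g.out (fun β => e (D.tl β))
  rw [h1, Finset.sum_sub_distrib, h2, sub_self]

lemma ker_dMap (a₀ : D.A) :
    LinearMap.ker D.dMap = Submodule.span ℂ {(fun _ => (1:ℂ) : D.A → ℂ)} := by
  ext e
  simp only [LinearMap.mem_ker, dMap, LinearMap.coe_mk, AddHom.coe_mk, funext_iff,
    Pi.zero_apply, sub_eq_zero, Submodule.mem_span_singleton]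
  constructor
  · intro h
    have const : ∀ a b : D.A, e a = e b := by
      intro a b
      induction D.connected a b with
      | refl => rfl
      | tail _ hrel ih =>
        obtain ⟨ed, ⟨h1, h2⟩ | ⟨h1, h2⟩⟩ := hrel
        · rw [ih, ← h1, ← h2, h ed]
        · rw [ih, ← h2, ← h1, h ed]
    exact ⟨e a₀, fun b => by simpa using const a₀ b⟩
  · rintro ⟨c, hce⟩ α
    rw [← hce, ← hce]
    simp

lemma card_H_eq : Fintype.card D.H = 2 * Fintype.card D.A := by
  rw [← Finset.card_univ (α := D.H),
    Finset.card_eq_sum_card_fiberwise (f := D.hd) (t := Finset.univ)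
      (fun x _ => Finset.mem_univ _)]
  have : ∀ a : D.A, (Finset.univ.filter (fun e => D.hd e = a)).card = 2 := by
    intro a; rw [← Fintype.card_subtype, D.two_in]
  simp [this, Finset.card_univ, mul_comm]

lemma finrank_Ssub : Module.finrank ℂ D.Ssub + Fintype.card D.Face
    = Fintype.card D.H := by
  have h := LinearMap.finrank_range_add_finrank_ker D.faceSumMap
  rw [D.ker_faceSumMap, LinearMap.range_eq_top.mpr D.faceSumMap_surj, finrank_top,
    Module.finrank_pi, Module.finrank_pi] at h
  omega

lemma finrank_Bsub (hA : Nonempty D.A) :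
    Module.finrank ℂ D.Bsub + 1 = Fintype.card D.A := by
  obtain ⟨a₀⟩ := hA
  have hone : ((fun _ => (1:ℂ)) : D.A → ℂ) ≠ 0 := by
    intro h
    have := congrFun h a₀
    norm_num at this
  have h := LinearMap.finrank_range_add_finrank_ker D.dMap
  rw [D.range_dMap, D.ker_dMap a₀, finrank_span_singleton hone,
    Module.finrank_pi] at h
  exact h

lemma Ssub_le_span : D.Ssub ≤ Submodule.span ℂ (Set.range D.nuArc) := by
  set P := Submodule.span ℂ (Set.range D.nuArc)
      ⊔ Submodule.span ℂ (Set.range (fun f : D.Face => D.ind f.out)) with hP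
  have hind : ∀ γ : D.H, D.ind γ ∈ P := by
    have key : ∀ (i : ℕ) (f : D.Face), D.ind ((D.σF ^ i) f.out) ∈ P := by
      intro i
      induction i with
      | zero =>
        intro f
        have : ((D.σF ^ 0) f.out) = f.out := rfl
        rw [this]
        exact Submodule.mem_sup_right (Submodule.subset_span ⟨f, rfl⟩)
      | succ n ih =>
        intro f
        have h1 : (D.σF ^ (n+1)) f.out = D.σF ((D.σF ^ n) f.out) := by
          rw [pow_succ', Equiv.Perm.mul_apply]
        have h2 : D.ind (D.σF ((D.σF ^ n) f.out))
            = D.ind ((D.σF ^ n) f.out) - D.nuArc ((D.σF ^ n) f.out) := by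
          funext γ; simp [ind, nuArc]
        rw [h1, h2]
        exact sub_mem (ih f)
          (Submodule.mem_sup_left (Submodule.subset_span ⟨_, rfl⟩))
    intro γ
    have hsc : D.σF.SameCycle ((D.faceCls γ).out) γ := Quotient.mk_out (s := D.fSetoid) γ
    obtain ⟨i, -, -, hi⟩ := Equiv.Perm.SameCycle.exists_pow_eq D.σF hsc
    rw [← hi]
    exact key i _
  have hall : ∀ v : D.H → ℂ, v ∈ P := by
    intro v
    have hv : v = ∑ γ : D.H, v γ • D.ind γ := by
      funext β
      rw [Finset.sum_apply]
      have : ∀ γ, (v γ • D.ind γ) β = if β = γ then v γ else 0 := by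
        intro γ; simp [ind, mul_ite]
      simp only [this, Finset.sum_ite_eq, Finset.mem_univ, if_true]
    rw [hv]
    exact Submodule.sum_mem _ fun γ _ => Submodule.smul_mem _ _ (hind γ)
  intro v hv
  obtain ⟨s, hs, r, hr, hvr⟩ := Submodule.mem_sup.mp (hall v)
  obtain ⟨c, hc⟩ := (Submodule.mem_span_range_iff_exists_fun ℂ).mp hr
  have hsS : s ∈ D.Ssub := by
    have hle : Submodule.span ℂ (Set.range D.nuArc) ≤ D.Ssub := by
      rw [Submodule.span_le]
      rintro x ⟨α, rfl⟩
      exact D.nuArc_mem_Ssub α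
    exact hle hs
  have hrS : r ∈ D.Ssub := by
    have : r = v - s := by rw [← hvr]; ring
    rw [this]
    exact sub_mem hv hsS
  have hc0 : ∀ g : D.Face, c g = 0 := by
    intro g
    have h0 := hrS g
    have hr' : ∀ β, r β = ∑ f : D.Face, c f * D.ind f.out β := by
      intro β
      rw [← hc, Finset.sum_apply]
      rfl
    rw [Finset.sum_congr rfl (fun β _ => hr' β), D.sum_ind_out c g] at h0
    exact h0
  have hr0 : r = 0 := by
    rw [← hc]
    simp [hc0]
  rwa [← hvr, hr0, add_zero]

/-- the key combinatorial induction along a spanning tree of the face graph -/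
lemma tree_good (Good : Set D.H)
    (hpart : ∀ α α' : D.H, D.hd α = D.hd α' → α ≠ α' → α ∈ Good → α' ∈ Good)
    (hface : ∀ α : D.H, (∀ β ∈ D.fOrbitFinset α, β ≠ α → β ∈ Good) → α ∈ Good) :
    ∀ (n : ℕ) (V : Finset D.Face) (E : Finset D.A),
      V.card = n →
      (∀ a ∈ E, ∀ α : D.H, D.hd α = a → D.faceCls α ∈ V) →
      (∀ f ∈ V, ∀ g ∈ V, Relation.ReflTransGen
        (fun x y => ∃ a ∈ E, ∃ α β : D.H, D.hd α = a ∧ D.hd β = a ∧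
          D.faceCls α = x ∧ D.faceCls β = y) f g) →
      E.card + 1 = V.card →
      (∀ α : D.H, D.faceCls α ∈ V → D.hd α ∉ E → α ∈ Good) →
      ∀ α : D.H, D.faceCls α ∈ V → α ∈ Good := by
  intro n
  induction n using Nat.strong_induction_on with
  | _ n IH =>
  intro V E hVn hEV hconn hcard hbase α hαV
  by_cases hE : E = ∅
  · exact hbase α hαV (by simp [hE])
  have hEne : E.Nonempty := Finset.nonempty_iff_ne_empty.mpr hE
  have hE1 : 1 ≤ E.card := Finset.card_pos.mpr hEne
  have hV2 : 2 ≤ V.card := by omega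
  -- degree counting to find a leaf face
  set s : Finset D.H := Finset.univ.filter (fun β => D.hd β ∈ E) with hs
  set deg : D.Face → ℕ := fun f => ((s.filter (fun β => D.faceCls β = f))).card with hdeg
  have hsum : ∑ f ∈ V, deg f = 2 * E.card := by
    have h1 : s.card = ∑ f ∈ V, deg f :=
      Finset.card_eq_sum_card_fiberwise
        (fun β hβ => hEV _ (Finset.mem_filter.mp hβ).2 β rfl)
    have h2 : s.card = ∑ a ∈ E, (s.filter (fun β => D.hd β = a)).card :=
      Finset.card_eq_sum_card_fiberwise (fun β hβ => (Finset.mem_filter.mp hβ).2)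
    have h3 : ∀ a ∈ E, (s.filter (fun β => D.hd β = a)).card = 2 := by
      intro a ha
      have : s.filter (fun β => D.hd β = a) = Finset.univ.filter (fun β => D.hd β = a) := by
        ext β
        simp only [hs, Finset.mem_filter, Finset.mem_univ, true_and]
        exact ⟨fun h => h.2, fun h => ⟨h ▸ ha, h⟩⟩
      rw [this, ← Fintype.card_subtype, D.two_in]
    rw [← h1, h2, Finset.sum_congr rfl h3, Finset.sum_const, smul_eq_mul, mul_comm]
  have hleaf : ∃ f ∈ V, deg f ≤ 1 := by
    by_contra hcon
    push_neg at hcon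
    have : V.card * 2 ≤ ∑ f ∈ V, deg f := by
      calc V.card * 2 = V.card • 2 := by rw [smul_eq_mul]
      _ ≤ ∑ f ∈ V, deg f := Finset.card_nsmul_le_sum V deg 2 (fun f hf => hcon f hf)
    omega
  obtain ⟨f, hfV, hdegf⟩ := hleaf
  have hdegf1 : deg f = 1 := by
    -- degree at least one by connectivity
    obtain ⟨g, hgV, hgf⟩ := Finset.exists_mem_ne (s := V) (by omega) f
    have hpath := hconn f hfV g hgV
    rcases Relation.ReflTransGen.cases_head hpath with heq | ⟨c, hstep, -⟩
    · exact absurd heq.symm hgf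
    obtain ⟨a, haE, α₁, β₁, h1, h2, h3, h4⟩ := hstep
    have hmem : α₁ ∈ s.filter (fun β => D.faceCls β = f) := by
      simp only [hs, Finset.mem_filter, Finset.mem_univ, true_and]
      exact ⟨h1 ▸ haE, h3⟩
    have h01 : 0 < deg f := Finset.card_pos.mpr ⟨α₁, hmem⟩
    omega
  obtain ⟨α₀, hα₀⟩ := Finset.card_eq_one.mp hdegf1
  have hα₀mem : α₀ ∈ s.filter (fun β => D.faceCls β = f) := by rw [hα₀]; simp
  have hα₀f : D.faceCls α₀ = f := (Finset.mem_filter.mp hα₀mem).2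
  have hα₀E : D.hd α₀ ∈ E := by
    have := (Finset.mem_filter.mp (Finset.mem_filter.mp hα₀mem).1).2
    exact this
  set a₀ := D.hd α₀ with ha₀
  have K : ∀ β : D.H, D.faceCls β = f → D.hd β ∈ E → β = α₀ := by
    intro β hβf hβE
    have : β ∈ s.filter (fun γ => D.faceCls γ = f) := by
      simp only [hs, Finset.mem_filter, Finset.mem_univ, true_and]
      exact ⟨hβE, hβf⟩
    rwa [hα₀, Finset.mem_singleton] at this
  -- the partner arrow
  have hfiber : (Finset.univ.filter (fun e => D.hd e = a₀)).card = 2 := by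
    rw [← Fintype.card_subtype, D.two_in]
  have hα₀fib : α₀ ∈ Finset.univ.filter (fun e => D.hd e = a₀) := by simp [ha₀]
  obtain ⟨α₀', hα₀'fib, hα₀'ne⟩ :=
    Finset.exists_mem_ne
      (s := Finset.univ.filter (fun e => D.hd e = a₀)) (by omega) α₀
  have hα₀'hd : D.hd α₀' = a₀ := (Finset.mem_filter.mp hα₀'fib).2
  have hfibeq : Finset.univ.filter (fun e => D.hd e = a₀) = {α₀, α₀'} :=
    D.head_fiber_eq rfl hα₀'hd (fun h => hα₀'ne h.symm)
  set f₂ := D.faceCls α₀' with hf₂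
  have hf₂V : f₂ ∈ V := hEV a₀ hα₀E α₀' hα₀'hd
  have hf₂f : f₂ ≠ f := by
    intro h
    exact hα₀'ne (K α₀' h (hα₀'hd ▸ hα₀E))
  -- α₀ and its partner are good
  have hα₀good : α₀ ∈ Good := by
    apply hface α₀
    intro β hβO hβne
    have hβf : D.faceCls β = f := by
      rw [← hα₀f]
      exact (D.faceCls_eq_of_sameCycle ((mem_fOrbit D).mp hβO)).symm
    apply hbase β (hβf ▸ hfV)
    intro hβE
    exact hβne (K β hβf hβE)
  have hα₀'good : α₀' ∈ Good :=
    hpart α₀ α₀' (hα₀'hd.symm) (fun h => hα₀'ne h.symm) hα₀good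
  -- set up the smaller tree
  set V' := V.erase f with hV'
  set E' := E.erase a₀ with hE'
  have hV'card : V'.card = n - 1 := by rw [hV', Finset.card_erase_of_mem hfV, hVn]
  have hE'card : E'.card = E.card - 1 := Finset.card_erase_of_mem hα₀E
  have hEV' : ∀ a ∈ E', ∀ β : D.H, D.hd β = a → D.faceCls β ∈ V' := by
    intro a ha β hβ
    have haE : a ∈ E := Finset.mem_of_mem_erase ha
    have h1 : D.faceCls β ∈ V := hEV a haE β hβ
    rw [hV', Finset.mem_erase]
    refine ⟨fun h => ?_, h1⟩
    have := K β h (hβ ▸ haE)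
    subst this
    exact (Finset.mem_erase.mp ha).1 hβ.symm
  -- connectivity surgery
  have haux : ∀ g h : D.Face, Relation.ReflTransGen
      (fun x y => ∃ a ∈ E, ∃ α β : D.H, D.hd α = a ∧ D.hd β = a ∧
        D.faceCls α = x ∧ D.faceCls β = y) g h → h ≠ f →
      Relation.ReflTransGen
      (fun x y => ∃ a ∈ E', ∃ α β : D.H, D.hd α = a ∧ D.hd β = a ∧
        D.faceCls α = x ∧ D.faceCls β = y) (if g = f then f₂ else g) h := by
    intro g h hpath
    induction hpath using Relation.ReflTransGen.head_induction_on with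
    | refl =>
      intro hh
      rw [if_neg hh]
    | @head x y hxy hyh ih =>
      intro hh
      have ihh := ih hh
      obtain ⟨a, haE, α₁, β₁, h1, h2, h3, h4⟩ := hxy
      by_cases hax : a = a₀
      · subst hax
        have hz : ∀ (z : D.Face) (γ : D.H), D.hd γ = a₀ → D.faceCls γ = z →
            (if z = f then f₂ else z) = f₂ := by
          intro z γ hγ hγz
          have : γ ∈ ({α₀, α₀'} : Finset D.H) := by
            rw [← hfibeq]; simp [hγ]
          rcases Finset.mem_insert.mp this with h | h
          · subst h; rw [← hγz, hα₀f, if_pos rfl]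
          · rw [Finset.mem_singleton] at h
            subst h; rw [← hγz, ← hf₂, if_neg hf₂f]
        rw [hz x α₁ h1 h3, ← hz y β₁ h2 h4]
        exact ihh
      · have hx : x ≠ f := by
          intro hxf
          exact hax (by rw [← h1, K α₁ (h3.trans hxf) (h1 ▸ haE)])
        have hy : y ≠ f := by
          intro hyf
          exact hax (by rw [← h2, K β₁ (h4.trans hyf) (h2 ▸ haE)])
        rw [if_neg hx]
        refine Relation.ReflTransGen.head
          ⟨a, Finset.mem_erase.mpr ⟨hax, haE⟩, α₁, β₁, h1, h2, h3, h4⟩ ?_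
        rwa [if_neg hy] at ihh
  have hconn' : ∀ g ∈ V', ∀ h ∈ V', Relation.ReflTransGen
      (fun x y => ∃ a ∈ E', ∃ α β : D.H, D.hd α = a ∧ D.hd β = a ∧
        D.faceCls α = x ∧ D.faceCls β = y) g h := by
    intro g hg h hh
    have hgf : g ≠ f := (Finset.mem_erase.mp hg).1
    have hhf : h ≠ f := (Finset.mem_erase.mp hh).1
    have := haux g h (hconn g (Finset.mem_of_mem_erase hg) h (Finset.mem_of_mem_erase hh)) hhf
    rwa [if_neg hgf] at this
  have hbase' : ∀ β : D.H, D.faceCls β ∈ V' → D.hd β ∉ E' → β ∈ Good := by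
    intro β hβV' hβE'
    by_cases hβE : D.hd β ∈ E
    · have : D.hd β = a₀ := by
        by_contra hne
        exact hβE' (Finset.mem_erase.mpr ⟨hne, hβE⟩)
      have : β ∈ ({α₀, α₀'} : Finset D.H) := by
        rw [← hfibeq]; simp [this]
      rcases Finset.mem_insert.mp this with h | h
      · subst h; exact hα₀good
      · rw [Finset.mem_singleton] at h; subst h; exact hα₀'good
    · exact hbase β (Finset.mem_of_mem_erase hβV') hβE
  -- conclude
  by_cases hαf : D.faceCls α = f
  · by_cases hαE : D.hd α ∈ E
    · have := K α hαf hαE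
      subst this
      exact hα₀good
    · exact hbase α hαV hαE
  · exact IH (n - 1) (by omega) V' E' hV'card hEV' hconn'
      (by omega) hbase' α (Finset.mem_erase.mpr ⟨hαf, hαV⟩)

end ArcDatum

set_option synthInstance.maxHeartbeats 1000000 in
set_option maxHeartbeats 2000000 in
open ArcDatum in
/-- (i) the arc classes `ν_{a,α}` lie in `S`; (ii) for the two angle arrows
`α, α'` with head `a` one has `ν_{a,α} + ν_{a,α'} ∈ B`; (iii) for a spanning
tree `𝒯` of the face graph and any choice of angle arrows `α_a` with head `a`,
the classes `ν_{a,α_a} + B`, `a ∈ 𝒜 ∖ 𝒯`, form a `ℂ`-basis of `S/B`. -/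
theorem arc_classes_basis (D : ArcDatum) (hNMD : D.NMD) :
    (∀ (a : D.A) (α : D.H), D.hd α = a → D.nuArc α ∈ D.Ssub) ∧
    (∀ (a : D.A) (α α' : D.H), D.hd α = a → D.hd α' = a → α ≠ α' →
      D.nuArc α + D.nuArc α' ∈ D.Bsub) ∧
    (∀ hS : ∀ α : D.H, D.nuArc α ∈ D.Ssub,
      ∀ 𝒯 : Finset D.A, D.IsSpanningTree 𝒯 →
      ∀ sel : ∀ a : D.A, a ∉ 𝒯 → D.H, (∀ (a : D.A) (h : a ∉ 𝒯), D.hd (sel a h) = a) →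
      ∃ B : Module.Basis {a : D.A // a ∉ 𝒯} ℂ (↥D.Ssub ⧸ (D.Bsub.comap D.Ssub.subtype)),
        ∀ a : {a : D.A // a ∉ 𝒯},
          B a = Submodule.Quotient.mk
            (⟨D.nuArc (sel a.1 a.2), hS (sel a.1 a.2)⟩ : D.Ssub)) := by
  refine ⟨fun a α _ => D.nuArc_mem_Ssub α,
    fun a α α' hα hα' hne => D.nuArc_add_mem_Bsub hα hα' hne, ?_⟩
  intro hS 𝒯 hTree sel hsel
  classical
  set B' : Submodule ℂ D.Ssub := D.Bsub.comap D.Ssub.subtype with hB'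
  set w : D.H → (D.Ssub ⧸ B') :=
    fun α => Submodule.Quotient.mk ⟨D.nuArc α, hS α⟩ with hw
  set v : {a : D.A // a ∉ 𝒯} → (D.Ssub ⧸ B') := fun a => w (sel a.1 a.2) with hv
  set T := Submodule.span ℂ (Set.range v) with hT
  have w_add : ∀ α α' : D.H, D.hd α = D.hd α' → α ≠ α' → w α + w α' = 0 := by
    intro α α' hhd hne
    rw [hw]
    show Submodule.Quotient.mk _ + Submodule.Quotient.mk _ = (0 : D.Ssub ⧸ B')
    rw [← Submodule.Quotient.mk_add, Submodule.Quotient.mk_eq_zero]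
    exact Submodule.mem_comap.mpr (D.nuArc_add_mem_Bsub rfl hhd.symm hne)
  have w_face : ∀ α : D.H, ∑ β ∈ D.fOrbitFinset α, w β = 0 := by
    intro α
    have hwq : ∀ β : D.H, w β = B'.mkQ ⟨D.nuArc β, hS β⟩ := fun β => rfl
    rw [Finset.sum_congr rfl (fun β _ => hwq β), ← map_sum]
    have hz : (∑ β ∈ D.fOrbitFinset α, (⟨D.nuArc β, hS β⟩ : D.Ssub)) = 0 := by
      apply Subtype.ext
      simp only [AddSubmonoidClass.coe_finset_sum, ZeroMemClass.coe_zero]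
      exact D.sum_nuArc_orbit α
    rw [hz, map_zero]
  have hTc : 𝒯.card + 1 = Fintype.card D.Face := by
    have h2 := hTree.2
    rw [Nat.card_eq_fintype_card] at h2
    omega
  have wT : ∀ α : D.H, w α ∈ T := by
    have hbase : ∀ α : D.H, D.hd α ∉ 𝒯 → w α ∈ T := by
      intro α hα
      by_cases h : α = sel (D.hd α) hα
      · rw [h]
        exact Submodule.subset_span ⟨⟨D.hd α, hα⟩, rfl⟩
      · have h2 := w_add α (sel (D.hd α) hα) (hsel (D.hd α) hα).symm h
        rw [eq_neg_of_add_eq_zero_left h2]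
        exact neg_mem (Submodule.subset_span ⟨⟨D.hd α, hα⟩, rfl⟩)
    have hpart : ∀ α α' : D.H, D.hd α = D.hd α' → α ≠ α' →
        α ∈ {α : D.H | w α ∈ T} → α' ∈ {α : D.H | w α ∈ T} := by
      intro α α' hhd hne hα
      have h2 := w_add α α' hhd hne
      have : w α' = -w α := eq_neg_of_add_eq_zero_right h2
      simp only [Set.mem_setOf_eq] at hα ⊢
      rw [this]
      exact neg_mem hα
    have hface : ∀ α : D.H, (∀ β ∈ D.fOrbitFinset α, β ≠ α →
        β ∈ {α : D.H | w α ∈ T}) → α ∈ {α : D.H | w α ∈ T} := by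
      intro α hβ
      have h0 := w_face α
      have hmem : α ∈ D.fOrbitFinset α :=
        (D.mem_fOrbit).mpr (Equiv.Perm.SameCycle.refl _ _)
      rw [← Finset.add_sum_erase _ _ hmem] at h0
      simp only [Set.mem_setOf_eq] at hβ ⊢
      rw [eq_neg_of_add_eq_zero_left h0]
      exact neg_mem (Submodule.sum_mem _ fun β hβ' =>
        hβ β (Finset.mem_of_mem_erase hβ') (Finset.mem_erase.mp hβ').1)
    intro α
    refine D.tree_good {α : D.H | w α ∈ T} hpart hface
      (Fintype.card D.Face) Finset.univ 𝒯 (Finset.card_univ)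
      (fun a _ α _ => Finset.mem_univ _)
      (fun f _ g _ => hTree.1 f g)
      (by rw [Finset.card_univ]; exact hTc)
      (fun α _ h => hbase α h) α (Finset.mem_univ _)
  have hspan : ⊤ ≤ T := by
    rintro x -
    obtain ⟨y, rfl⟩ := Submodule.Quotient.mk_surjective B' x
    have hy : (y : D.H → ℂ) ∈ Submodule.span ℂ (Set.range D.nuArc) :=
      D.Ssub_le_span y.2
    have hmap : Submodule.map D.Ssub.subtype
        (Submodule.span ℂ (Set.range (fun α => (⟨D.nuArc α, hS α⟩ : D.Ssub))))
        = Submodule.span ℂ (Set.range D.nuArc) := by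
      rw [Submodule.map_span, ← Set.range_comp]
      rfl
    rw [← hmap] at hy
    obtain ⟨z, hz, hzy⟩ := Submodule.mem_map.mp hy
    have hzy' : z = y := Subtype.ext hzy
    subst hzy'
    have hmk : Submodule.Quotient.mk (p := B') z ∈ Submodule.map B'.mkQ
        (Submodule.span ℂ (Set.range (fun α => (⟨D.nuArc α, hS α⟩ : D.Ssub)))) :=
      ⟨z, hz, rfl⟩
    rw [Submodule.map_span] at hmk
    refine Submodule.span_le.mpr ?_ hmk
    rintro q ⟨u, ⟨α, rfl⟩, rfl⟩
    exact wT α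
  have hFpos : 0 < Fintype.card D.Face := by omega
  have hFne : Nonempty D.Face := Fintype.card_pos_iff.mp hFpos
  have hA : Nonempty D.A := ⟨D.hd (Classical.arbitrary D.Face).out⟩
  have h1 := D.finrank_Ssub
  have h2 := D.finrank_Bsub hA
  have h3 := D.card_H_eq
  have h4 := Submodule.finrank_quotient_add_finrank B'
  have h5 : Module.finrank ℂ B' = Module.finrank ℂ D.Bsub :=
    (Submodule.comapSubtypeEquivOfLe D.Bsub_le_Ssub).finrank_eq
  have h6 : Fintype.card {a : D.A // a ∉ 𝒯} = Fintype.card D.A - 𝒯.card := by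
    rw [Fintype.card_subtype_compl, Fintype.card_coe]
  have h7 : 𝒯.card ≤ Fintype.card D.A := Finset.card_le_univ 𝒯
  have hcard : Fintype.card {a : D.A // a ∉ 𝒯}
      = Module.finrank ℂ (D.Ssub ⧸ B') := by omega
  refine ⟨basisOfTopLeSpanOfCardEqFinrank v hspan hcard, fun a => ?_⟩
  rw [coe_basisOfTopLeSpanOfCardEqFinrank]
end
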